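/- Let q ≥ 3, i ≤ ⌊n/2⌋, and let f be a nonzero eigenfunction of the Hamming graph H(n,q) for eigenvalue n(q-1)-qi. Then f is nonzero on at least 2^i (q-1)^i q^{n-2i} vertices, and this bound is attained. -/

import Mathlib

/-- Sum of `f` over the neighbors of `x` in the Hamming graph `H(n,q)`. -/
noncomputable def adjSum (n q : ℕ) (f : (Fin n → Fin q) → ℝ) (x : Fin n → Fin q) : ℝ :=
  ∑ y : Fin n → Fin q, if hammingDist x y = 1 then f y else 0

/-- `f` satisfies the eigenfunction equation for eigenvalue `lam` on `H(n,q)`. -/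
def IsEigenfun (n q : ℕ) (lam : ℝ) (f : (Fin n → Fin q) → ℝ) : Prop :=
  ∀ x, adjSum n q f x = lam * f x

/-- `f ∈ U_i(n,q)`, the eigenspace for eigenvalue `n(q-1) - q i`. -/
def memU (n q i : ℕ) (f : (Fin n → Fin q) → ℝ) : Prop :=
  IsEigenfun n q ((n : ℝ) * ((q : ℝ) - 1) - (q : ℝ) * (i : ℝ)) f

/-- `f ∈ U_{[i,j]}(n,q) = U_i ⊕ ⋯ ⊕ U_j`. -/
def memUI (n q i j : ℕ) (f : (Fin n → Fin q) → ℝ) : Prop :=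
  ∃ g : ℕ → (Fin n → Fin q) → ℝ,
    (∀ t ∈ Finset.Icc i j, memU n q t (g t)) ∧ f = ∑ t ∈ Finset.Icc i j, g t

/-- The cardinality of the support of `f : Σ_q^n → ℝ`. -/
noncomputable def suppCard (n q : ℕ) (f : (Fin n → Fin q) → ℝ) : ℕ :=
  Nat.card {x : Fin n → Fin q // f x ≠ 0}


open Finset

lemma hammingDist_snoc (n q : ℕ) (x y : Fin n → Fin q) (a b : Fin q) :
    hammingDist (Fin.snoc x a : Fin (n+1) → Fin q) (Fin.snoc y b)
      = hammingDist x y + (if a = b then 0 else 1) := by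
  rw [hammingDist, hammingDist, Finset.card_filter, Finset.card_filter,
    Fin.sum_univ_castSucc]
  simp [Fin.snoc_castSucc, Fin.snoc_last, ne_eq]

-- adjSum linearity
lemma adjSum_add (n q : ℕ) (f g : (Fin n → Fin q) → ℝ) (x) :
    adjSum n q (f + g) x = adjSum n q f x + adjSum n q g x := by
  rw [adjSum, adjSum, adjSum, ← Finset.sum_add_distrib]
  refine Finset.sum_congr rfl fun y _ => ?_
  by_cases h : hammingDist x y = 1 <;> simp [h]

lemma adjSum_smul (n q : ℕ) (c : ℝ) (f : (Fin n → Fin q) → ℝ) (x) :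
    adjSum n q (c • f) x = c * adjSum n q f x := by
  rw [adjSum, adjSum, Finset.mul_sum]
  refine Finset.sum_congr rfl fun y _ => ?_
  by_cases h : hammingDist x y = 1 <;> simp [h]

lemma adjSum_congr (n q : ℕ) (f g : (Fin n → Fin q) → ℝ) (h : f = g) (x) :
    adjSum n q f x = adjSum n q g x := by rw [h]

lemma adjSum_zero (n q : ℕ) (x) : adjSum n q 0 x = 0 := by
  simp [adjSum]

lemma adjSum_sum {α : Type*} (n q : ℕ) (s : Finset α) (F : α → (Fin n → Fin q) → ℝ) (x) :
    adjSum n q (∑ t ∈ s, F t) x = ∑ t ∈ s, adjSum n q (F t) x := by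
  classical
  induction s using Finset.induction with
  | empty => simp [adjSum_zero]
  | insert _ _ hts ih =>
      rw [Finset.sum_insert hts, adjSum_add, ih, Finset.sum_insert hts]

lemma adjSum_sub (n q : ℕ) (f g : (Fin n → Fin q) → ℝ) (x) :
    adjSum n q (f - g) x = adjSum n q f x - adjSum n q g x := by
  have h : f - g = f + (-1 : ℝ) • g := by ext z; simp; ring
  rw [h, adjSum_add, adjSum_smul]; ring

def res (n q : ℕ) (a : Fin q) (f : (Fin (n+1) → Fin q) → ℝ) : (Fin n → Fin q) → ℝ :=
  fun x' => f (Fin.snoc x' a)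

lemma snoc_bijective (n q : ℕ) :
    Function.Bijective (fun p : (Fin n → Fin q) × Fin q => (Fin.snoc p.1 p.2 : Fin (n+1) → Fin q)) := by
  constructor
  · intro p1 p2 h
    have h1 := congrArg Fin.init h
    have h2 := congrArg (fun y : Fin (n+1) → Fin q => y (Fin.last n)) h
    simp only [Fin.init_snoc] at h1
    simp only [Fin.snoc_last] at h2
    exact Prod.ext h1 h2
  · intro y
    exact ⟨(Fin.init y, y (Fin.last n)), Fin.snoc_init_self y⟩

lemma adjSum_snoc (n q : ℕ) (f : (Fin (n+1) → Fin q) → ℝ) (x' : Fin n → Fin q) (a : Fin q) :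
    adjSum (n+1) q f (Fin.snoc x' a) =
      adjSum n q (res n q a f) x' + ((∑ b : Fin q, res n q b f x') - res n q a f x') := by
  classical
  rw [adjSum]
  rw [← Fintype.sum_bijective _ (snoc_bijective n q)
      (fun p : (Fin n → Fin q) × Fin q =>
        if hammingDist (Fin.snoc x' a : Fin (n+1) → Fin q) (Fin.snoc p.1 p.2) = 1
          then f (Fin.snoc p.1 p.2) else 0)
      _ (fun p => rfl)]
  rw [Fintype.sum_prod_type]
  have key : ∀ y' : Fin n → Fin q,
      (∑ b : Fin q, if hammingDist (Fin.snoc x' a : Fin (n+1) → Fin q) (Fin.snoc y' b) = 1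
          then f (Fin.snoc y' b) else 0)
      = (if hammingDist x' y' = 1 then res n q a f y' else 0)
        + ∑ b ∈ Finset.univ.erase a, (if y' = x' then f (Fin.snoc y' b) else 0) := by
    intro y'
    rw [← Finset.add_sum_erase Finset.univ _ (Finset.mem_univ a)]
    congr 1
    · rw [hammingDist_snoc]; simp [res]
    · refine Finset.sum_congr rfl fun b hb => ?_
      rw [hammingDist_snoc]
      have hba : ¬ (a = b) := fun h => (Finset.mem_erase.mp hb).1 h.symm
      rw [if_neg hba]
      by_cases hy : y' = x'
      · subst hy; simp [hammingDist_self]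
      · have : hammingDist x' y' ≠ 0 := by
          rw [hammingDist_ne_zero]; exact fun h => hy h.symm
        rw [if_neg (by omega), if_neg hy]
  rw [Finset.sum_congr rfl (fun y' _ => key y')]
  rw [Finset.sum_add_distrib]
  have h1 : (∑ y' : Fin n → Fin q, if hammingDist x' y' = 1 then res n q a f y' else 0)
      = adjSum n q (res n q a f) x' := by rw [adjSum]
  have h2 : (∑ y' : Fin n → Fin q, ∑ b ∈ Finset.univ.erase a,
        if y' = x' then f (Fin.snoc y' b) else 0)
      = (∑ b : Fin q, res n q b f x') - res n q a f x' := by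
    rw [Finset.sum_comm]
    have : ∀ b : Fin q, (∑ y' : Fin n → Fin q, if y' = x' then f (Fin.snoc y' b) else 0)
        = res n q b f x' := by
      intro b
      rw [Finset.sum_ite_eq' Finset.univ x' (fun y' => f (Fin.snoc y' b))]
      simp [res]
    rw [Finset.sum_congr rfl (fun b _ => this b)]
    rw [← Finset.add_sum_erase Finset.univ _ (Finset.mem_univ a)]
    ring
  rw [h1, h2]

noncomputable def Sres (n q : ℕ) (f : (Fin (n+1) → Fin q) → ℝ) : (Fin n → Fin q) → ℝ :=
  ∑ b : Fin q, res n q b f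

lemma res_eigen_eq {n q : ℕ} {μ : ℝ} {f : (Fin (n+1) → Fin q) → ℝ}
    (hf : IsEigenfun (n+1) q μ f) (a : Fin q) (x' : Fin n → Fin q) :
    adjSum n q (res n q a f) x' = (μ + 1) * res n q a f x' - Sres n q f x' := by
  have h := hf (Fin.snoc x' a)
  rw [adjSum_snoc] at h
  have hS : Sres n q f x' = ∑ b : Fin q, res n q b f x' := by
    simp [Sres]
  rw [hS]
  have : res n q a f x' = f (Fin.snoc x' a) := rfl
  rw [this]; linarith

lemma Sres_eigen {n q : ℕ} {μ : ℝ} {f : (Fin (n+1) → Fin q) → ℝ}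
    (hf : IsEigenfun (n+1) q μ f) :
    IsEigenfun n q (μ + 1 - q) (Sres n q f) := by
  intro x'
  rw [Sres, adjSum_sum]
  rw [Finset.sum_congr rfl (fun b _ => res_eigen_eq hf b x')]
  rw [Finset.sum_sub_distrib]
  rw [← Finset.mul_sum]
  have hc : ∑ _b : Fin q, Sres n q f x' = (q : ℝ) * Sres n q f x' := by
    rw [Finset.sum_const]
    simp [mul_comm]
  rw [hc]
  have hSx : (∑ b : Fin q, res n q b f) x' = Sres n q f x' := rfl
  have hS : Sres n q f x' = ∑ b : Fin q, res n q b f x' := by simp [Sres]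
  rw [← hS, hSx]
  ring

lemma diff_eigen {n q : ℕ} {μ : ℝ} {f : (Fin (n+1) → Fin q) → ℝ}
    (hf : IsEigenfun (n+1) q μ f) (a b : Fin q) :
    IsEigenfun n q (μ + 1) (res n q a f - res n q b f) := by
  intro x'
  rw [adjSum_sub, res_eigen_eq hf a x', res_eigen_eq hf b x']
  have : (res n q a f - res n q b f) x' = res n q a f x' - res n q b f x' := rfl
  rw [this]; ring

lemma part_eigen {n q : ℕ} {μ : ℝ} {f : (Fin (n+1) → Fin q) → ℝ} (hq : 0 < q)
    (hf : IsEigenfun (n+1) q μ f) (a : Fin q) :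
    IsEigenfun n q (μ + 1) (res n q a f - ((q : ℝ))⁻¹ • Sres n q f) := by
  intro x'
  have hq' : (q : ℝ) ≠ 0 := by positivity
  rw [adjSum_sub, adjSum_smul, res_eigen_eq hf a x', Sres_eigen hf x']
  have : (res n q a f - ((q : ℝ))⁻¹ • Sres n q f) x'
      = res n q a f x' - ((q : ℝ))⁻¹ * Sres n q f x' := rfl
  rw [this]
  field_simp
  ring

lemma res_decomp {n q : ℕ} {f : (Fin (n+1) → Fin q) → ℝ} (hq : 0 < q) (a : Fin q) :
    res n q a f = (res n q a f - ((q : ℝ))⁻¹ • Sres n q f) + ((q : ℝ))⁻¹ • Sres n q f := by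
  ext x'; simp

lemma adjSum_const_one (n q : ℕ) (x : Fin n → Fin q) :
    adjSum n q (fun _ => (1 : ℝ)) x = (n : ℝ) * ((q : ℝ) - 1) := by
  induction n with
  | zero =>
      rw [adjSum]
      rw [Finset.sum_eq_zero]
      · simp
      · intro y _
        have : y = x := Subsingleton.elim y x
        rw [this, hammingDist_self]
        simp
  | succ m ih =>
      have hx : x = Fin.snoc (Fin.init x) (x (Fin.last m)) := (Fin.snoc_init_self x).symm
      rw [hx, adjSum_snoc]
      have h1 : res m q (x (Fin.last m)) (fun _ => (1:ℝ)) = fun _ => (1:ℝ) := rfl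
      have h2 : ∀ b : Fin q, res m q b (fun _ => (1:ℝ)) = fun _ => (1:ℝ) := fun _ => rfl
      rw [Finset.sum_congr rfl (fun b _ => congrFun (h2 b) (Fin.init x))]
      rw [Finset.sum_const]
      simp only [h1, ih]
      simp only [Finset.card_univ, Fintype.card_fin]
      push_cast
      ring

lemma eigen_vanish {n q : ℕ} {μ : ℝ} {h : (Fin n → Fin q) → ℝ} (hq : 0 < q)
    (hμ : (n : ℝ) * ((q : ℝ) - 1) < μ) (hh : IsEigenfun n q μ h) : h = 0 := by
  have : Nonempty (Fin q) := ⟨⟨0, hq⟩⟩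
  obtain ⟨x₀, _, hx₀⟩ := Finset.exists_max_image (Finset.univ : Finset (Fin n → Fin q))
    (fun x => |h x|) ⟨Classical.arbitrary _, Finset.mem_univ _⟩
  have hb : |adjSum n q h x₀| ≤ (n : ℝ) * ((q : ℝ) - 1) * |h x₀| := by
    calc |adjSum n q h x₀| ≤ ∑ y : Fin n → Fin q, |if hammingDist x₀ y = 1 then h y else 0| :=
          Finset.abs_sum_le_sum_abs _ _
      _ ≤ ∑ y : Fin n → Fin q, (if hammingDist x₀ y = 1 then (1:ℝ) else 0) * |h x₀| := by
          refine Finset.sum_le_sum fun y _ => ?_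
          by_cases hd : hammingDist x₀ y = 1
          · simp only [hd, if_pos]
            simpa using hx₀ y (Finset.mem_univ y)
          · simp [hd]
      _ = (∑ y : Fin n → Fin q, (if hammingDist x₀ y = 1 then (1:ℝ) else 0)) * |h x₀| := by
          rw [Finset.sum_mul]
      _ = (n : ℝ) * ((q : ℝ) - 1) * |h x₀| := by
          have : (∑ y : Fin n → Fin q, if hammingDist x₀ y = 1 then (1:ℝ) else 0)
              = adjSum n q (fun _ => 1) x₀ := rfl
          rw [this, adjSum_const_one]
  rw [hh x₀, abs_mul] at hb
  have hz : |h x₀| = 0 := by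
    have hnn : (0:ℝ) ≤ (n : ℝ) * ((q:ℝ)-1) := by
      have : (1:ℝ) ≤ q := by exact_mod_cast hq
      have : (0:ℝ) ≤ (q:ℝ) - 1 := by linarith
      positivity
    have habs : (n : ℝ) * ((q:ℝ)-1) < |μ| := lt_of_lt_of_le hμ (le_abs_self μ)
    nlinarith [abs_nonneg (h x₀)]
  funext x
  have := hx₀ x (Finset.mem_univ x)
  rw [hz] at this
  have : |h x| = 0 := le_antisymm this (abs_nonneg _)
  simpa using abs_eq_zero.mp this

-- eigen closure
lemma IsEigenfun.add {n q : ℕ} {μ : ℝ} {f g : (Fin n → Fin q) → ℝ}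
    (hf : IsEigenfun n q μ f) (hg : IsEigenfun n q μ g) : IsEigenfun n q μ (f + g) := by
  intro x; rw [adjSum_add, hf x, hg x]; show _ = μ * (f x + g x); ring

lemma IsEigenfun.sub {n q : ℕ} {μ : ℝ} {f g : (Fin n → Fin q) → ℝ}
    (hf : IsEigenfun n q μ f) (hg : IsEigenfun n q μ g) : IsEigenfun n q μ (f - g) := by
  intro x; rw [adjSum_sub, hf x, hg x]; show _ = μ * (f x - g x); ring

lemma IsEigenfun.smul {n q : ℕ} {μ : ℝ} (c : ℝ) {f : (Fin n → Fin q) → ℝ}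
    (hf : IsEigenfun n q μ f) : IsEigenfun n q μ (c • f) := by
  intro x; rw [adjSum_smul, hf x]; show _ = μ * (c * f x); ring

lemma IsEigenfun.zero {n q : ℕ} {μ : ℝ} : IsEigenfun n q μ (0 : (Fin n → Fin q) → ℝ) := by
  intro x; rw [adjSum_zero]; show (0:ℝ) = μ * 0; ring

lemma memU_zero {n q t : ℕ} : memU n q t (0 : (Fin n → Fin q) → ℝ) := IsEigenfun.zero

-- memUI utilities
lemma memUI_zero {n q i j : ℕ} : memUI n q i j (0 : (Fin n → Fin q) → ℝ) :=
  ⟨0, fun _ _ => memU_zero, by simp⟩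

lemma memUI_add {n q i j : ℕ} {f g : (Fin n → Fin q) → ℝ}
    (hf : memUI n q i j f) (hg : memUI n q i j g) : memUI n q i j (f + g) := by
  obtain ⟨a, ha, rfl⟩ := hf
  obtain ⟨b, hb, rfl⟩ := hg
  exact ⟨a + b, fun t ht => (ha t ht).add (hb t ht), by rw [← Finset.sum_add_distrib]; rfl⟩

lemma memU_memUI {n q t i j : ℕ} {f : (Fin n → Fin q) → ℝ}
    (hf : memU n q t f) (h1 : i ≤ t) (h2 : t ≤ j) : memUI n q i j f := by
  classical
  refine ⟨fun s => if s = t then f else 0, fun s _ => ?_, ?_⟩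
  · by_cases hs : s = t
    · subst hs; simpa using hf
    · simp [hs, memU_zero]
  · rw [Finset.sum_ite_eq' (Finset.Icc i j) t (fun _ => f)]
    simp [Finset.mem_Icc, h1, h2]

lemma memUI_mono {n q i j i' j' : ℕ} {f : (Fin n → Fin q) → ℝ}
    (hii : i' ≤ i) (hjj : j ≤ j') (hf : memUI n q i j f) : memUI n q i' j' f := by
  classical
  obtain ⟨g, hg, rfl⟩ := hf
  refine ⟨fun t => if t ∈ Finset.Icc i j then g t else 0, fun t ht => ?_, ?_⟩
  · show memU n q t (if t ∈ Finset.Icc i j then g t else 0)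
    by_cases h : t ∈ Finset.Icc i j
    · rw [if_pos h]; exact hg t h
    · rw [if_neg h]; exact memU_zero
  · rw [Finset.sum_ite_mem]
    have : Finset.Icc i' j' ∩ Finset.Icc i j = Finset.Icc i j := by
      refine Finset.inter_eq_right.mpr (Finset.Icc_subset_Icc hii hjj)
    rw [this]

lemma memUI_sum {α : Type*} {n q i j : ℕ} (s : Finset α) (F : α → (Fin n → Fin q) → ℝ)
    (h : ∀ t ∈ s, memUI n q i j (F t)) : memUI n q i j (∑ t ∈ s, F t) := by
  classical
  induction s using Finset.induction with
  | empty => simpa using memUI_zero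
  | @insert a s ha ih =>
      rw [Finset.sum_insert ha]
      exact memUI_add (h a (Finset.mem_insert_self a s))
        (ih fun t ht => h t (Finset.mem_insert_of_mem ht))

-- independence
lemma eigen_indep {n q : ℕ} (hq : 0 < q) :
    ∀ (s : Finset ℕ) (g : ℕ → (Fin n → Fin q) → ℝ),
      (∀ t ∈ s, memU n q t (g t)) → (∑ t ∈ s, g t) = 0 → ∀ t ∈ s, g t = 0 := by
  classical
  intro s
  induction s using Finset.induction with
  | empty => intro g _ _ t ht; exact absurd ht (Finset.notMem_empty t)
  | @insert t₀ s' ht₀ ih =>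
      intro g hg hsum
      set lam : ℕ → ℝ := fun t => (n : ℝ) * ((q : ℝ) - 1) - (q : ℝ) * (t : ℝ) with hlam
      have key : ∀ x, ∑ t ∈ insert t₀ s', (lam t - lam t₀) * g t x = 0 := by
        intro x
        have h1 : adjSum n q (∑ t ∈ insert t₀ s', g t) x = 0 := by
          rw [hsum]; exact adjSum_zero n q x
        rw [adjSum_sum] at h1
        have h2 : ∑ t ∈ insert t₀ s', lam t * g t x = 0 := by
          rw [← h1]
          exact (Finset.sum_congr rfl fun t ht => (hg t ht x).symm)
        have h3 : ∑ t ∈ insert t₀ s', lam t₀ * g t x = 0 := by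
          rw [← Finset.mul_sum]
          have : (∑ t ∈ insert t₀ s', g t) x = 0 := by rw [hsum]; rfl
          have h4 : ∑ t ∈ insert t₀ s', g t x = 0 := by
            rw [← this]; exact (Finset.sum_apply x _ _).symm
          rw [h4]; ring
        have := sub_eq_zero.mpr (h2.trans h3.symm)
        rw [← Finset.sum_sub_distrib] at this
        rw [← this]
        exact Finset.sum_congr rfl fun t _ => by ring
      have hz : ∀ t ∈ s', g t = 0 := by
        have hsum' : (∑ t ∈ s', (lam t - lam t₀) • g t) = 0 := by
          funext x
          have := key x
          rw [Finset.sum_insert ht₀] at this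
          simp only [sub_self, zero_mul, zero_add] at this
          show (∑ t ∈ s', (lam t - lam t₀) • g t) x = 0
          rw [Finset.sum_apply]
          simpa using this
        have hmem : ∀ t ∈ s', memU n q t ((lam t - lam t₀) • g t) := fun t ht =>
          IsEigenfun.smul _ (hg t (Finset.mem_insert_of_mem ht))
        intro t ht
        have h0 := ih (fun t => (lam t - lam t₀) • g t) hmem hsum' t ht
        have hne : lam t - lam t₀ ≠ 0 := by
          have htne : t ≠ t₀ := fun h => ht₀ (h ▸ ht)
          have : (t : ℝ) ≠ (t₀ : ℝ) := by exact_mod_cast htne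
          have hq' : (q : ℝ) ≠ 0 := by positivity
          simp only [hlam]
          intro hcon
          apply this
          have : (q:ℝ) * (t:ℝ) = (q:ℝ) * (t₀:ℝ) := by linarith
          exact mul_left_cancel₀ hq' this
        rcases smul_eq_zero.mp h0 with h | h
        · exact absurd h hne
        · exact h
      intro t ht
      rcases Finset.mem_insert.mp ht with rfl | ht'
      · have hS : (∑ u ∈ s', g u) = 0 := by
          funext x
          show (∑ u ∈ s', g u) x = 0
          rw [Finset.sum_apply]
          exact Finset.sum_eq_zero fun u hu => by rw [hz u hu]; rfl
        rw [Finset.sum_insert ht₀, hS, add_zero] at hsum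
        exact hsum
      · exact hz t ht'

-- eigenvalue arithmetic helpers
lemma lam_shift {n q t : ℕ} (ht : 1 ≤ t) :
    ((n+1 : ℕ) : ℝ) * ((q : ℝ) - 1) - (q : ℝ) * (t : ℝ) + 1
      = (n : ℝ) * ((q : ℝ) - 1) - (q : ℝ) * ((t - 1 : ℕ) : ℝ) := by
  have : ((t - 1 : ℕ) : ℝ) = (t : ℝ) - 1 := by
    have : (1:ℕ) ≤ t := ht
    push_cast [Nat.cast_sub this]
    ring
  rw [this]; push_cast; ring

lemma lam_shift_S {n q t : ℕ} :
    ((n+1 : ℕ) : ℝ) * ((q : ℝ) - 1) - (q : ℝ) * (t : ℝ) + 1 - q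
      = (n : ℝ) * ((q : ℝ) - 1) - (q : ℝ) * (t : ℝ) := by
  push_cast; ring

lemma memU_res_part {n q t : ℕ} (hq : 0 < q) {f : (Fin (n+1) → Fin q) → ℝ}
    (hf : memU (n+1) q t f) (a : Fin q) (ht : 1 ≤ t) :
    memU n q (t-1) (res n q a f - ((q : ℝ))⁻¹ • Sres n q f) := by
  have := part_eigen hq hf a
  rw [lam_shift ht] at this
  exact this

lemma memU_res_part_zero {n q : ℕ} (hq : 0 < q) {f : (Fin (n+1) → Fin q) → ℝ}
    (hf : memU (n+1) q 0 f) (a : Fin q) :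
    res n q a f - ((q : ℝ))⁻¹ • Sres n q f = 0 := by
  refine eigen_vanish hq ?_ (part_eigen hq hf a)
  have h1 : (1:ℝ) ≤ (q:ℝ) := by exact_mod_cast hq
  push_cast
  nlinarith

lemma memU_Sres {n q t : ℕ} {f : (Fin (n+1) → Fin q) → ℝ}
    (hf : memU (n+1) q t f) : memU n q t (Sres n q f) := by
  have := Sres_eigen hf
  rw [lam_shift_S] at this
  exact this

lemma memU_Sres_smul {n q t : ℕ} {f : (Fin (n+1) → Fin q) → ℝ}
    (hf : memU (n+1) q t f) : memU n q t (((q : ℝ))⁻¹ • Sres n q f) :=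
  IsEigenfun.smul _ (memU_Sres hf)

lemma memU_diff {n q t : ℕ} {f : (Fin (n+1) → Fin q) → ℝ}
    (hf : memU (n+1) q t f) (a b : Fin q) (ht : 1 ≤ t) :
    memU n q (t-1) (res n q a f - res n q b f) := by
  have := diff_eigen hf a b
  rw [lam_shift ht] at this
  exact this

lemma memU_diff_zero {n q : ℕ} (hq : 0 < q) {f : (Fin (n+1) → Fin q) → ℝ}
    (hf : memU (n+1) q 0 f) (a b : Fin q) :
    res n q a f - res n q b f = 0 := by
  refine eigen_vanish hq ?_ (diff_eigen hf a b)
  have h1 : (1:ℝ) ≤ (q:ℝ) := by exact_mod_cast hq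
  push_cast
  nlinarith

-- res linearity over decomposition sums
lemma res_sum {n q : ℕ} (a : Fin q) (s : Finset ℕ) (g : ℕ → (Fin (n+1) → Fin q) → ℝ) :
    res n q a (∑ t ∈ s, g t) = ∑ t ∈ s, res n q a (g t) := by
  funext x'
  rw [Finset.sum_apply]
  show (∑ t ∈ s, g t) (Fin.snoc x' a) = _
  rw [Finset.sum_apply]
  rfl

-- (aA)
lemma memUI_res {n q i j : ℕ} (hq : 0 < q) {f : (Fin (n+1) → Fin q) → ℝ}
    (hf : memUI (n+1) q i j f) (a : Fin q) : memUI n q (i-1) j (res n q a f) := by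
  obtain ⟨g, hg, rfl⟩ := hf
  rw [res_sum]
  refine memUI_sum _ _ fun t ht => ?_
  have h1 : i ≤ t ∧ t ≤ j := Finset.mem_Icc.mp ht
  have hgt := hg t ht
  have hdec : res n q a (g t)
      = (res n q a (g t) - ((q : ℝ))⁻¹ • Sres n q (g t)) + ((q : ℝ))⁻¹ • Sres n q (g t) := by
    ext x'; simp
  rw [hdec]
  rcases Nat.eq_zero_or_pos t with rfl | htpos
  · rw [memU_res_part_zero hq hgt a]
    rw [zero_add]
    exact memU_memUI (memU_Sres_smul hgt) (Nat.sub_le i 1 |>.trans h1.1) h1.2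
  · refine memUI_add ?_ ?_
    · exact memU_memUI (memU_res_part hq hgt a htpos)
        (by omega) (by omega)
    · exact memU_memUI (memU_Sres_smul hgt) (by omega) h1.2

-- (cA)
lemma memUI_res_diff {n q i j : ℕ} (hq : 0 < q) {f : (Fin (n+1) → Fin q) → ℝ}
    (hf : memUI (n+1) q i j f) (a b : Fin q) :
    memUI n q (i-1) (j-1) (res n q a f - res n q b f) := by
  obtain ⟨g, hg, rfl⟩ := hf
  have hd : res n q a (∑ t ∈ Finset.Icc i j, g t) - res n q b (∑ t ∈ Finset.Icc i j, g t)
      = ∑ t ∈ Finset.Icc i j, (res n q a (g t) - res n q b (g t)) := by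
    rw [Finset.sum_sub_distrib, res_sum, res_sum]
  rw [hd]
  refine memUI_sum _ _ fun t ht => ?_
  have h1 : i ≤ t ∧ t ≤ j := Finset.mem_Icc.mp ht
  have hgt := hg t ht
  rcases Nat.eq_zero_or_pos t with rfl | htpos
  · rw [memU_diff_zero hq hgt a b]
    exact memUI_zero
  · exact memU_memUI (memU_diff hgt a b htpos) (by omega) (by omega)

-- (cA0)
lemma res_diff_zero00 {n q : ℕ} (hq : 0 < q) {f : (Fin (n+1) → Fin q) → ℝ}
    (hf : memUI (n+1) q 0 0 f) (a b : Fin q) :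
    res n q a f - res n q b f = 0 := by
  obtain ⟨g, hg, rfl⟩ := hf
  have h0 : Finset.Icc 0 0 = {0} := rfl
  rw [h0] at *
  rw [Finset.sum_singleton] at *
  exact memU_diff_zero hq (hg 0 (by simp)) a b

-- (d)
lemma memUI_Sres {n q i j : ℕ} {f : (Fin (n+1) → Fin q) → ℝ}
    (hf : memUI (n+1) q i j f) : memUI n q i j (Sres n q f) := by
  obtain ⟨g, hg, rfl⟩ := hf
  have : Sres n q (∑ t ∈ Finset.Icc i j, g t) = ∑ t ∈ Finset.Icc i j, Sres n q (g t) := by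
    rw [Sres]
    rw [Finset.sum_congr rfl (fun b _ => res_sum b (Finset.Icc i j) g)]
    rw [Finset.sum_comm]
    rfl
  rw [this]
  exact memUI_sum _ _ fun t ht => memU_memUI (memU_Sres (hg t ht))
    (Finset.mem_Icc.mp ht).1 (Finset.mem_Icc.mp ht).2

-- intersection lemma
lemma memUI_inter {n q i j : ℕ} (hq : 0 < q) (hi : 1 ≤ i) (hij : i ≤ j)
    {w : (Fin n → Fin q) → ℝ} (hw : w ≠ 0)
    (ha : memUI n q i j w) (hb : memUI n q (i-1) (j-1) w) :
    i < j ∧ memUI n q i (j-1) w := by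
  classical
  obtain ⟨g, hg, hgw⟩ := ha
  obtain ⟨h, hh, hhw⟩ := hb
  set F : ℕ → (Fin n → Fin q) → ℝ := fun t =>
    (if t ∈ Finset.Icc i j then g t else 0) - (if t ∈ Finset.Icc (i-1) (j-1) then h t else 0)
    with hF
  have hFmem : ∀ t ∈ Finset.Icc (i-1) j, memU n q t (F t) := by
    intro t _
    refine IsEigenfun.sub ?_ ?_
    · by_cases h' : t ∈ Finset.Icc i j
      · simp only [if_pos h']; exact hg t h'
      · simp only [if_neg h']; exact memU_zero
    · by_cases h' : t ∈ Finset.Icc (i-1) (j-1)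
      · simp only [if_pos h']; exact hh t h'
      · simp only [if_neg h']; exact memU_zero
  have hFsum : ∑ t ∈ Finset.Icc (i-1) j, F t = 0 := by
    rw [hF]
    rw [Finset.sum_sub_distrib]
    rw [Finset.sum_ite_mem, Finset.sum_ite_mem]
    have e1 : Finset.Icc (i-1) j ∩ Finset.Icc i j = Finset.Icc i j :=
      Finset.inter_eq_right.mpr (Finset.Icc_subset_Icc (by omega) le_rfl)
    have e2 : Finset.Icc (i-1) j ∩ Finset.Icc (i-1) (j-1) = Finset.Icc (i-1) (j-1) :=
      Finset.inter_eq_right.mpr (Finset.Icc_subset_Icc le_rfl (by omega))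
    rw [e1, e2, ← hgw, ← hhw]
    simp
  have hFj : F j = 0 :=
    eigen_indep hq _ F hFmem hFsum j (Finset.mem_Icc.mpr ⟨by omega, le_rfl⟩)
  have hgj : g j = 0 := by
    have hjmem : j ∈ Finset.Icc i j := Finset.mem_Icc.mpr ⟨hij, le_rfl⟩
    have hjnot : j ∉ Finset.Icc (i-1) (j-1) := by
      simp only [Finset.mem_Icc]; omega
    rw [hF] at hFj
    simp only [if_pos hjmem, if_neg hjnot, sub_zero] at hFj
    exact hFj
  have hij' : i ≠ j := by
    intro hcon
    apply hw
    subst hcon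
    rw [hgw]
    rw [Finset.Icc_self, Finset.sum_singleton]
    exact hgj
  refine ⟨lt_of_le_of_ne hij hij', ?_⟩
  have hjlt : i ≤ j - 1 := by omega
  have hsplit : Finset.Icc i j = insert j (Finset.Icc i (j-1)) := by
    ext t
    simp only [Finset.mem_Icc, Finset.mem_insert]
    omega
  have hjnot' : j ∉ Finset.Icc i (j-1) := by
    simp only [Finset.mem_Icc]; omega
  refine ⟨g, fun t ht => hg t (Finset.Icc_subset_Icc le_rfl (by omega) ht), ?_⟩
  rw [hgw, hsplit, Finset.sum_insert hjnot', hgj, zero_add]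

lemma suppCard_eq (n q : ℕ) (f : (Fin n → Fin q) → ℝ) :
    suppCard n q f = (Finset.univ.filter fun x => f x ≠ 0).card := by
  classical
  rw [suppCard, Nat.card_eq_fintype_card, Fintype.card_subtype]

lemma suppCard_zero (n q : ℕ) : suppCard n q (0 : (Fin n → Fin q) → ℝ) = 0 := by
  rw [suppCard_eq]
  simp

lemma suppCard_pos {n q : ℕ} {f : (Fin n → Fin q) → ℝ} (hf : f ≠ 0) :
    1 ≤ suppCard n q f := by
  classical
  rw [suppCard_eq]
  rw [Nat.one_le_iff_ne_zero, ← Nat.pos_iff_ne_zero, Finset.card_pos]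
  obtain ⟨x, hx⟩ := Function.ne_iff.mp hf
  exact ⟨x, Finset.mem_filter.mpr ⟨Finset.mem_univ x, hx⟩⟩

lemma suppCard_sub_le (n q : ℕ) (u v : (Fin n → Fin q) → ℝ) :
    suppCard n q (u - v) ≤ suppCard n q u + suppCard n q v := by
  classical
  rw [suppCard_eq, suppCard_eq, suppCard_eq]
  refine le_trans (Finset.card_le_card ?_) (Finset.card_union_le _ _)
  intro x hx
  simp only [Finset.mem_filter, Finset.mem_univ, true_and, Finset.mem_union] at hx ⊢
  by_contra hcon
  push_neg at hcon
  apply hx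
  show u x - v x = 0
  rw [hcon.1, hcon.2, sub_zero]

lemma suppCard_split (n q : ℕ) (f : (Fin (n+1) → Fin q) → ℝ) :
    suppCard (n+1) q f = ∑ a : Fin q, suppCard n q (res n q a f) := by
  classical
  rw [suppCard_eq]
  rw [Finset.card_eq_sum_card_fiberwise
    (f := fun x : Fin (n+1) → Fin q => x (Fin.last n)) (t := Finset.univ)
    (fun x _ => Finset.mem_univ _)]
  refine Finset.sum_congr rfl fun a _ => ?_
  rw [suppCard_eq]
  refine Finset.card_bij' (fun x _ => Fin.init x) (fun y' _ => Fin.snoc y' a) ?_ ?_ ?_ ?_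
  · intro x hx
    simp only [Finset.mem_filter, Finset.mem_univ, true_and] at hx ⊢
    show f (Fin.snoc (Fin.init x) a) ≠ 0
    rw [← hx.2, Fin.snoc_init_self]
    exact hx.1
  · intro y' hy'
    simp only [Finset.mem_filter, Finset.mem_univ, true_and] at hy' ⊢
    exact ⟨hy', by simp [Fin.snoc_last]⟩
  · intro x hx
    simp only [Finset.mem_filter, Finset.mem_univ, true_and] at hx
    show Fin.snoc (Fin.init x) a = x
    conv_lhs => rw [← hx.2]
    exact Fin.snoc_init_self x
  · intro y' _
    show Fin.init (Fin.snoc y' a : Fin (n+1) → Fin q) = y'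
    simp

def pc (n q : ℕ) (σ : Equiv.Perm (Fin n)) (f : (Fin n → Fin q) → ℝ) : (Fin n → Fin q) → ℝ :=
  fun x => f (x ∘ σ)

lemma hammingDist_comp_perm {n q : ℕ} (σ : Equiv.Perm (Fin n)) (x y : Fin n → Fin q) :
    hammingDist (x ∘ σ) (y ∘ σ) = hammingDist x y := by
  rw [hammingDist, hammingDist]
  refine Finset.card_bij' (fun k _ => σ k) (fun k _ => σ.symm k) ?_ ?_ ?_ ?_
  · intro k hk
    simp only [Finset.mem_filter, Finset.mem_univ, true_and] at hk ⊢
    exact hk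
  · intro k hk
    simp only [Finset.mem_filter, Finset.mem_univ, true_and] at hk ⊢
    show x (σ (σ.symm k)) ≠ y (σ (σ.symm k))
    simpa using hk
  · intro k _; simp
  · intro k _; simp

lemma comp_perm_bijective (n q : ℕ) (σ : Equiv.Perm (Fin n)) :
    Function.Bijective (fun y : Fin n → Fin q => y ∘ σ) := by
  constructor
  · intro y1 y2 h
    funext k
    have := congrFun h (σ.symm k)
    simpa using this
  · intro y
    exact ⟨y ∘ σ.symm, by funext k; simp⟩

lemma adjSum_pc {n q : ℕ} (σ : Equiv.Perm (Fin n)) (f : (Fin n → Fin q) → ℝ) (x : Fin n → Fin q) :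
    adjSum n q (pc n q σ f) x = adjSum n q f (x ∘ σ) := by
  rw [adjSum, adjSum]
  refine Fintype.sum_bijective _ (comp_perm_bijective n q σ) _ _ fun y => ?_
  conv_rhs => rw [hammingDist_comp_perm σ x y]
  rfl

lemma memU_pc {n q t : ℕ} (σ : Equiv.Perm (Fin n)) {f : (Fin n → Fin q) → ℝ}
    (hf : memU n q t f) : memU n q t (pc n q σ f) := by
  intro x
  rw [adjSum_pc]
  exact hf (x ∘ σ)

lemma memUI_pc {n q i j : ℕ} (σ : Equiv.Perm (Fin n)) {f : (Fin n → Fin q) → ℝ}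
    (hf : memUI n q i j f) : memUI n q i j (pc n q σ f) := by
  obtain ⟨g, hg, rfl⟩ := hf
  refine ⟨fun t => pc n q σ (g t), fun t ht => memU_pc σ (hg t ht), ?_⟩
  funext x
  rw [Finset.sum_apply]
  show (∑ t ∈ Finset.Icc i j, g t) (x ∘ σ) = _
  rw [Finset.sum_apply]
  rfl

lemma pc_ne_zero {n q : ℕ} (σ : Equiv.Perm (Fin n)) {f : (Fin n → Fin q) → ℝ}
    (hf : f ≠ 0) : pc n q σ f ≠ 0 := by
  obtain ⟨x, hx⟩ := Function.ne_iff.mp hf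
  refine Function.ne_iff.mpr ⟨x ∘ σ.symm, ?_⟩
  show f ((x ∘ σ.symm) ∘ σ) ≠ _
  have : (x ∘ σ.symm) ∘ σ = x := by funext k; simp
  rw [this]
  exact hx

lemma suppCard_pc {n q : ℕ} (σ : Equiv.Perm (Fin n)) (f : (Fin n → Fin q) → ℝ) :
    suppCard n q (pc n q σ f) = suppCard n q f := by
  rw [suppCard, suppCard]
  refine Nat.card_congr ?_
  refine
    { toFun := fun x => ⟨x.1 ∘ σ, x.2⟩
      invFun := fun x => ⟨x.1 ∘ σ.symm, ?_⟩
      left_inv := fun x => by ext1; funext k; simp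
      right_inv := fun x => by ext1; funext k; simp }
  have := x.2
  show f ((x.1 ∘ σ.symm) ∘ σ) ≠ 0
  have h2 : (x.1 ∘ σ.symm) ∘ σ = x.1 := by funext k; simp
  rw [h2]
  exact this

-- constant functions
lemma memU_const (n q : ℕ) (c : ℝ) : memU n q 0 (fun _ => c) := by
  intro x
  have : (fun _ : Fin n → Fin q => c) = c • (fun _ => (1:ℝ)) := by funext y; simp
  rw [this, adjSum_smul, adjSum_const_one]
  simp only [Pi.smul_apply, smul_eq_mul, mul_one, Nat.cast_zero]
  ring

lemma memUI_const_zero {n q i j : ℕ} (hq : 0 < q) (hi : 1 ≤ i) {c : ℝ}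
    (hf : memUI n q i j (fun _ => c)) : c = 0 := by
  classical
  have hne : Nonempty (Fin n → Fin q) := ⟨fun _ => ⟨0, hq⟩⟩
  obtain ⟨g, hg, hgw⟩ := hf
  set F : ℕ → (Fin n → Fin q) → ℝ := fun t =>
    (if t ∈ Finset.Icc i j then g t else 0)
      - (if t = 0 then (fun _ : Fin n → Fin q => c) else 0) with hF
  have hFmem : ∀ t ∈ Finset.Icc 0 j, memU n q t (F t) := by
    intro t _
    refine IsEigenfun.sub ?_ ?_
    · by_cases h' : t ∈ Finset.Icc i j
      · simp only [if_pos h']; exact hg t h'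
      · simp only [if_neg h']; exact memU_zero
    · by_cases h' : t = 0
      · simp only [if_pos h']; subst h'; exact memU_const n q c
      · simp only [if_neg h']; exact memU_zero
  by_cases hj : j < i
  · -- Icc i j empty
    rw [Finset.Icc_eq_empty (by omega)] at hgw
    simp only [Finset.sum_empty] at hgw
    exact congrFun hgw (Classical.arbitrary _)
  push_neg at hj
  have hFsum : ∑ t ∈ Finset.Icc 0 j, F t = 0 := by
    rw [hF, Finset.sum_sub_distrib, Finset.sum_ite_mem]
    have e1 : Finset.Icc 0 j ∩ Finset.Icc i j = Finset.Icc i j :=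
      Finset.inter_eq_right.mpr (Finset.Icc_subset_Icc (by omega) le_rfl)
    rw [e1]
    have e2 : (∑ t ∈ Finset.Icc 0 j, if t = 0 then (fun _ : Fin n → Fin q => c) else 0)
        = (fun _ => c) := by
      rw [Finset.sum_ite_eq' (Finset.Icc 0 j) 0 (fun _ _ => c)]
      simp
    rw [e2, ← hgw, sub_self]
  have hF0 : F 0 = 0 :=
    eigen_indep hq _ F hFmem hFsum 0 (Finset.mem_Icc.mpr ⟨le_rfl, by omega⟩)
  have h0 : (0:ℕ) ∉ Finset.Icc i j := by simp only [Finset.mem_Icc]; omega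
  rw [hF] at hF0
  simp only [if_neg h0, if_pos rfl, zero_sub, neg_eq_zero] at hF0
  exact congrFun hF0 (Classical.arbitrary _)

lemma hamming_update_lt {n q : ℕ} {x y : Fin n → Fin q} {k : Fin n} (hk : x k ≠ y k) :
    hammingDist x (Function.update y k (x k)) = hammingDist x y - 1 := by
  classical
  rw [hammingDist, hammingDist]
  have hset : (Finset.univ.filter fun i => x i ≠ Function.update y k (x k) i)
      = (Finset.univ.filter fun i => x i ≠ y i).erase k := by
    ext i
    simp only [Finset.mem_filter, Finset.mem_univ, true_and, Finset.mem_erase]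
    by_cases hik : i = k
    · subst hik
      simp [Function.update_self]
    · simp [Function.update_of_ne hik, hik]
  rw [hset]
  rw [Finset.card_erase_of_mem]
  simp only [Finset.mem_filter, Finset.mem_univ, true_and]
  exact hk

lemma const_of_update {n q : ℕ} {f : (Fin n → Fin q) → ℝ}
    (h : ∀ x k c, f (Function.update x k c) = f x) : ∀ x y, f x = f y := by
  intro x y
  generalize hd : hammingDist x y = d
  induction d using Nat.strong_induction_on generalizing y with
  | _ d ih =>
    rcases Nat.eq_zero_or_pos d with rfl | hdpos
    · rw [eq_of_hammingDist_eq_zero hd]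
    · have hxy : x ≠ y := by
        intro e; subst e; rw [hammingDist_self] at hd; omega
      obtain ⟨k, hk⟩ := Function.ne_iff.mp hxy
      have hcard : hammingDist x (Function.update y k (x k)) = d - 1 := by
        rw [hamming_update_lt hk, hd]
      have h1 : f x = f (Function.update y k (x k)) :=
        ih (d-1) (by omega) (Function.update y k (x k)) hcard
      rw [h1, h y k (x k)]

lemma exists_update_ne {n q : ℕ} {f : (Fin n → Fin q) → ℝ}
    (h : ¬ (∀ x y, f x = f y)) : ∃ x k c, f (Function.update x k c) ≠ f x := by
  by_contra hcon
  push_neg at hcon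
  exact h (const_of_update hcon)

lemma snoc_swap {m q : ℕ} (r : Fin (m+1)) (x : Fin (m+1) → Fin q) (v : Fin q) :
    (Fin.snoc (Fin.init (x ∘ (Equiv.swap r (Fin.last m)))) v : Fin (m+1) → Fin q)
      ∘ (Equiv.swap r (Fin.last m)) = Function.update x r v := by
  funext j
  show (Fin.snoc (Fin.init (x ∘ (Equiv.swap r (Fin.last m)))) v : Fin (m+1) → Fin q)
      ((Equiv.swap r (Fin.last m)) j) = _
  by_cases hjr : j = r
  · subst hjr
    rw [Equiv.swap_apply_left, Fin.snoc_last, Function.update_self]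
  · rw [Function.update_of_ne hjr]
    by_cases hjl : j = Fin.last m
    · subst hjl
      rw [Equiv.swap_apply_right]
      have hrl : r ≠ Fin.last m := fun h => hjr h.symm
      obtain ⟨k, hk⟩ := Fin.exists_castSucc_eq.mpr hrl
      subst hk
      rw [Fin.snoc_castSucc]
      show x ((Equiv.swap (Fin.castSucc k) (Fin.last m)) (Fin.castSucc k)) = x (Fin.last m)
      rw [Equiv.swap_apply_left]
    · rw [Equiv.swap_apply_of_ne_of_ne hjr hjl]
      obtain ⟨k, hk⟩ := Fin.exists_castSucc_eq.mpr hjl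
      subst hk
      rw [Fin.snoc_castSucc]
      show x ((Equiv.swap r (Fin.last m)) (Fin.castSucc k)) = x (Fin.castSucc k)
      rw [Equiv.swap_apply_of_ne_of_ne hjr hjl]

lemma exists_perm_res_ne {m q i j : ℕ} (hq : 0 < q) (hi : 1 ≤ i)
    {f : (Fin (m+1) → Fin q) → ℝ} (hf0 : f ≠ 0) (hmem : memUI (m+1) q i j f) :
    ∃ (σ : Equiv.Perm (Fin (m+1))) (a b : Fin q),
      res m q a (pc (m+1) q σ f) ≠ res m q b (pc (m+1) q σ f) := by
  have hnc : ¬ (∀ x y, f x = f y) := by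
    intro hcon
    have hne : Nonempty (Fin (m+1) → Fin q) := ⟨fun _ => ⟨0, hq⟩⟩
    obtain ⟨x₀⟩ := hne
    have : f = fun _ => f x₀ := funext fun y => hcon y x₀
    rw [this] at hmem hf0
    have := memUI_const_zero hq hi hmem
    apply hf0
    funext y
    exact this
  obtain ⟨x, r, c, hx⟩ := exists_update_ne hnc
  refine ⟨Equiv.swap r (Fin.last m), x r, c, ?_⟩
  apply Function.ne_iff.mpr
  refine ⟨Fin.init (x ∘ (Equiv.swap r (Fin.last m))), ?_⟩
  show pc (m+1) q _ f _ ≠ pc (m+1) q _ f _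
  rw [pc, pc]
  rw [snoc_swap, snoc_swap]
  rw [Function.update_eq_self]
  exact fun h => hx (h.symm)

lemma res_all_zero {n q : ℕ} {f : (Fin (n+1) → Fin q) → ℝ}
    (h : ∀ a, res n q a f = 0) : f = 0 := by
  funext x
  have : f (Fin.snoc (Fin.init x) (x (Fin.last n))) = 0 :=
    congrFun (h (x (Fin.last n))) (Fin.init x)
  rwa [Fin.snoc_init_self] at this

lemma count_arith {q c σ B P : ℤ} (hq : 3 ≤ q) (hc1 : 1 ≤ c) (hcq : c ≤ q - 1)
    (hB : 0 ≤ B) (hσB : B ≤ σ) (h2σ : 2*σ ≤ q*B) (hP : (q - c)*(q*B - σ) ≤ P) :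
    2*(q-1)*B ≤ c*σ + P := by
  rcases le_or_gt (2*c) q with hcase | hcase
  · nlinarith [mul_nonneg (by linarith : (0:ℤ) ≤ q - 2*c) (by linarith : (0:ℤ) ≤ q*B - 2*σ),
      mul_nonneg (sq_nonneg (q-2)) hB]
  · nlinarith [mul_nonneg (by linarith : (0:ℤ) ≤ 2*c - q) (by linarith : (0:ℤ) ≤ σ - B),
      mul_nonneg (mul_nonneg (by linarith : (0:ℤ) ≤ q - 2) (by linarith : (0:ℤ) ≤ q - 1 - c)) hB]

theorem lowerBound {q : ℕ} (hq : 3 ≤ q) :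
    ∀ n i j, i ≤ j → i + j ≤ n → ∀ f : (Fin n → Fin q) → ℝ,
      memUI n q i j f → f ≠ 0 → 2^i * (q-1)^i * q^(n-i-j) ≤ suppCard n q f := by
  have hq0 : 0 < q := by omega
  intro n
  induction n using Nat.strong_induction_on with
  | _ n IH =>
    intro i j hij hijn f hmem hf0
    rcases Nat.eq_zero_or_pos i with rfl | hipos
    · -- i = 0
      simp only [pow_zero, one_mul, Nat.zero_sub]
      rcases le_or_gt n j with hjn | hjn
      · have : n - 0 - j = 0 := by omega
        rw [this, pow_zero]
        exact suppCard_pos hf0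
      · -- j < n, so n = m+1
        obtain ⟨m, rfl⟩ : ∃ m, n = m + 1 := ⟨n - 1, by omega⟩
        rw [suppCard_split]
        by_cases hall : ∀ a : Fin q, res m q a f ≠ 0
        · have hbound : ∀ a : Fin q, q^(m-j) ≤ suppCard m q (res m q a f) := by
            intro a
            have hr := memUI_res hq0 hmem a
            simp only [Nat.zero_sub] at hr
            have := IH m (by omega) 0 j (by omega) (by omega) _ hr (hall a)
            simpa using this
          calc q^(m+1-j) = q * q^(m-j) := by
                rw [← pow_succ']
                congr 1
                omega
            _ ≤ ∑ _a : Fin q, q^(m-j) := by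
                rw [Finset.sum_const, Finset.card_univ, Fintype.card_fin, smul_eq_mul]
            _ ≤ ∑ a : Fin q, suppCard m q (res m q a f) :=
                Finset.sum_le_sum fun a _ => hbound a
        · push_neg at hall
          obtain ⟨a₀, ha₀⟩ := hall
          have hb : ∃ b, res m q b f ≠ 0 := by
            by_contra hcon
            push_neg at hcon
            exact hf0 (res_all_zero hcon)
          obtain ⟨b, hbne⟩ := hb
          rcases Nat.eq_zero_or_pos j with rfl | hjpos
          · exfalso
            have := res_diff_zero00 hq0 hmem b a₀
            rw [ha₀, sub_zero] at this
            exact hbne this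
          · have hd := memUI_res_diff hq0 hmem b a₀
            rw [ha₀, sub_zero] at hd
            simp only [Nat.zero_sub] at hd
            have hIH := IH m (by omega) 0 (j-1) (by omega) (by omega) _ hd hbne
            simp only [pow_zero, one_mul, Nat.zero_sub] at hIH
            have he : m - 0 - (j-1) = m+1-0-j := by omega
            rw [he] at hIH
            calc q^(m+1-0-j) ≤ suppCard m q (res m q b f) := hIH
              _ ≤ ∑ a : Fin q, suppCard m q (res m q a f) :=
                Finset.single_le_sum (f := fun a => suppCard m q (res m q a f))
                  (fun a _ => Nat.zero_le _) (Finset.mem_univ b)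
    · -- i ≥ 1
      obtain ⟨m, rfl⟩ : ∃ m, n = m + 1 := ⟨n - 1, by omega⟩
      obtain ⟨σ, a₀', b₀', hσ⟩ := exists_perm_res_ne hq0 hipos hf0 hmem
      set F := pc (m+1) q σ f with hF
      have hFmem : memUI (m+1) q i j F := memUI_pc σ hmem
      have hFne : F ≠ 0 := pc_ne_zero σ hf0
      have hFsupp : suppCard (m+1) q F = suppCard (m+1) q f := suppCard_pc σ f
      rw [← hFsupp, suppCard_split]
      set s : Fin q → ℕ := fun a => suppCard m q (res m q a F) with hs
      set e := m + 1 - i - j with he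
      set B₂ := 2^(i-1) * (q-1)^(i-1) * q^e with hB₂
      have hT : 2^i * (q-1)^i * q^(m+1-i-j) = 2 * (q-1) * B₂ := by
        rw [hB₂, ← he]
        have h2 : 2^i = 2 * 2^(i-1) := by
          rw [← pow_succ']
          congr 1
          omega
        have h3 : (q-1)^i = (q-1) * (q-1)^(i-1) := by
          rw [← pow_succ']
          congr 1
          omega
        rw [h2, h3]
        ring
      rw [hT]
      -- key facts
      have hB1 : ∀ a b : Fin q, res m q a F ≠ res m q b F → q * B₂ ≤ s a + s b := by
        intro a b hab
        have hdne : res m q a F - res m q b F ≠ 0 := sub_ne_zero.mpr hab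
        have hd := memUI_res_diff hq0 hFmem a b
        have hIH := IH m (by omega) (i-1) (j-1) (by omega) (by omega) _ hd hdne
        have hexp : m - (i-1) - (j-1) = e + 1 := by omega
        rw [hexp] at hIH
        have : 2^(i-1) * (q-1)^(i-1) * q^(e+1) = q * B₂ := by
          rw [hB₂, pow_succ]
          ring
        rw [this] at hIH
        calc q * B₂ ≤ suppCard m q (res m q a F - res m q b F) := hIH
          _ ≤ s a + s b := suppCard_sub_le m q _ _
      have hB2 : ∀ a : Fin q, res m q a F ≠ 0 → B₂ ≤ s a := by
        intro a ha
        have hr := memUI_res hq0 hFmem a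
        have hIH := IH m (by omega) (i-1) j (by omega) (by omega) _ hr ha
        have hexp : m - (i-1) - j = e := by omega
        rw [hexp] at hIH
        exact hIH
      set A := (Finset.univ : Finset (Fin q)).filter (fun a => 2 * s a < q * B₂) with hA
      have hAeq : ∀ a ∈ A, ∀ b ∈ A, res m q a F = res m q b F := by
        intro a ha b hb
        by_contra hne
        have := hB1 a b hne
        simp only [hA, Finset.mem_filter] at ha hb
        omega
      have hAne : A ≠ Finset.univ := by
        intro hcon
        exact hσ (hAeq a₀' (by rw [hcon]; exact Finset.mem_univ _)
          b₀' (by rw [hcon]; exact Finset.mem_univ _))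
      have hsum_split : ∑ a : Fin q, s a = (∑ a ∈ A, s a) + ∑ a ∈ Finset.univ.filter
          (fun a => ¬ (2 * s a < q * B₂)), s a := by
        rw [hA]
        exact (Finset.sum_filter_add_sum_filter_not Finset.univ _ _).symm
      rcases Finset.eq_empty_or_nonempty A with hAemp | hAnonemp
      · -- A empty : all big
        have hbig : ∀ a : Fin q, q * B₂ ≤ 2 * s a := by
          intro a
          by_contra hcon
          push_neg at hcon
          have : a ∈ A := by
            rw [hA]; exact Finset.mem_filter.mpr ⟨Finset.mem_univ _, hcon⟩
          rw [hAemp] at this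
          exact absurd this (Finset.notMem_empty a)
        have h1 : q * (q * B₂) ≤ 2 * ∑ a : Fin q, s a := by
          calc q * (q * B₂) = ∑ _a : Fin q, q * B₂ := by
                rw [Finset.sum_const, Finset.card_univ, Fintype.card_fin, smul_eq_mul]
            _ ≤ ∑ a : Fin q, 2 * s a := Finset.sum_le_sum fun a _ => hbig a
            _ = 2 * ∑ a : Fin q, s a := by rw [Finset.mul_sum]
        have hq1 : 1 ≤ q := by omega
        zify [hq1] at h1 ⊢
        nlinarith [mul_nonneg (sq_nonneg ((q:ℤ)-2)) (by positivity : (0:ℤ) ≤ (B₂:ℤ))]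
      · obtain ⟨a₀, ha₀A⟩ := hAnonemp
        have hc₀pos : 1 ≤ A.card := Finset.card_pos.mpr ⟨a₀, ha₀A⟩
        have hc₀lt : A.card ≤ q - 1 := by
          have := Finset.card_lt_card (Finset.ssubset_univ_iff.mpr hAne)
          rw [Finset.card_univ, Fintype.card_fin] at this
          omega
        have hsA : ∀ a ∈ A, s a = s a₀ := by
          intro a ha
          rw [hs]
          simp only []
          rw [hAeq a ha a₀ ha₀A]
        have hsumA : ∑ a ∈ A, s a = A.card * s a₀ := by
          rw [Finset.sum_congr rfl hsA, Finset.sum_const, smul_eq_mul]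
        have h2σ₀ : 2 * s a₀ < q * B₂ := by
          have := Finset.mem_filter.mp ha₀A
          exact this.2
        have hout_ne : ∀ a, a ∉ A → res m q a F ≠ res m q a₀ F := by
          intro a haA hcon
          apply haA
          rw [hA]
          refine Finset.mem_filter.mpr ⟨Finset.mem_univ _, ?_⟩
          have : s a = s a₀ := by rw [hs]; simp only []; rw [hcon]
          omega
        have hout_big : ∀ a, a ∉ A → q * B₂ ≤ s a + s a₀ := fun a ha =>
          hB1 a a₀ (hout_ne a ha)
        have hcard_out : (Finset.univ.filter (fun a => ¬ (2 * s a < q * B₂))).card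
            = q - A.card := by
          have h := Finset.card_filter_add_card_filter_not
            (s := (Finset.univ : Finset (Fin q))) (p := fun a => 2 * s a < q * B₂)
          rw [Finset.card_univ, Fintype.card_fin] at h
          rw [← hA] at h
          omega
        have hmem_out : ∀ a, a ∈ Finset.univ.filter (fun a => ¬ (2 * s a < q * B₂)) ↔ a ∉ A := by
          intro a
          rw [hA]
          simp [Finset.mem_filter]
        by_cases hv : res m q a₀ F = 0
        · -- v = 0
          have hσ₀0 : s a₀ = 0 := by
            rw [hs]; simp only []; rw [hv, suppCard_zero]
          have hbig : ∀ a, a ∉ A → q * B₂ ≤ s a := by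
            intro a ha
            have := hout_big a ha
            omega
          rcases le_or_gt 2 (q - A.card) with h2k | h2k
          · -- at least two outside
            have : (q - A.card) * (q * B₂) ≤ ∑ a ∈ Finset.univ.filter
                (fun a => ¬ (2 * s a < q * B₂)), s a := by
              calc (q - A.card) * (q * B₂)
                  = ∑ _a ∈ Finset.univ.filter (fun a => ¬ (2 * s a < q * B₂)), q * B₂ := by
                    rw [Finset.sum_const, hcard_out, smul_eq_mul]
                _ ≤ _ := Finset.sum_le_sum fun a ha => hbig a ((hmem_out a).mp ha)
            have hge : 2 * (q * B₂) ≤ ∑ a : Fin q, s a := by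
              rw [hsum_split]
              calc 2 * (q * B₂) ≤ (q - A.card) * (q * B₂) :=
                    Nat.mul_le_mul_right _ h2k
                _ ≤ _ := le_trans this (Nat.le_add_left _ _)
            have hq1 : 1 ≤ q := by omega
            zify [hq1] at hge ⊢
            nlinarith [(by positivity : (0:ℤ) ≤ (B₂:ℤ))]
          · -- exactly one outside
            have hk1 : q - A.card = 1 := by omega
            rw [hk1] at hcard_out
            obtain ⟨astar, hastar⟩ := Finset.card_eq_one.mp hcard_out
            have hastar_notA : astar ∉ A := by
              rw [← hmem_out astar, hastar]
              exact Finset.mem_singleton_self astar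
            have hallA : ∀ a, a ≠ astar → a ∈ A := by
              intro a ha
              by_contra hcon
              have : a ∈ Finset.univ.filter (fun a => ¬ (2 * s a < q * B₂)) :=
                (hmem_out a).mpr hcon
              rw [hastar] at this
              exact ha (Finset.mem_singleton.mp this)
            have hallzero : ∀ a, a ≠ astar → res m q a F = 0 := by
              intro a ha
              rw [hAeq a (hallA a ha) a₀ ha₀A, hv]
            have hwne : res m q astar F ≠ 0 := by
              intro hcon
              apply hFne
              apply res_all_zero
              intro a
              by_cases ha : a = astar
              · rw [ha]; exact hcon
              · exact hallzero a ha
            have hSr : Sres m q F = res m q astar F := by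
              rw [Sres]
              rw [← Finset.add_sum_erase Finset.univ _ (Finset.mem_univ astar)]
              have : ∑ b ∈ Finset.univ.erase astar, res m q b F = 0 := by
                apply Finset.sum_eq_zero
                intro b hb
                exact hallzero b (Finset.mem_erase.mp hb).1
              rw [this, add_zero]
            have hw1 : memUI m q i j (res m q astar F) := by
              rw [← hSr]
              exact memUI_Sres hFmem
            have hw2 : memUI m q (i-1) (j-1) (res m q astar F) := by
              have := memUI_res_diff hq0 hFmem astar a₀
              rw [hv, sub_zero] at this
              exact this
            obtain ⟨hij2, hw3⟩ := memUI_inter hq0 hipos hij hwne hw1 hw2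
            have hIH := IH m (by omega) i (j-1) (by omega) (by omega) _ hw3 hwne
            have hexp : m - i - (j-1) = e := by omega
            rw [hexp] at hIH
            have hTe : 2^i * (q-1)^i * q^e = 2 * (q-1) * B₂ := by
              rw [hB₂]
              have h2 : 2^i = 2 * 2^(i-1) := by
                rw [← pow_succ']; congr 1; omega
              have h3 : (q-1)^i = (q-1) * (q-1)^(i-1) := by
                rw [← pow_succ']; congr 1; omega
              rw [h2, h3]; ring
            rw [hTe] at hIH
            calc 2 * (q-1) * B₂ ≤ s astar := hIH
              _ ≤ ∑ a : Fin q, s a :=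
                Finset.single_le_sum (fun a _ => Nat.zero_le _) (Finset.mem_univ astar)
        · -- v ≠ 0
          have hσ₀B : B₂ ≤ s a₀ := hB2 a₀ hv
          have hout_ge : ∀ a, a ∉ A → q * B₂ - s a₀ ≤ s a := by
            intro a ha
            have := hout_big a ha
            omega
          have hsum_out : (q - A.card) * (q * B₂ - s a₀) ≤ ∑ a ∈ Finset.univ.filter
              (fun a => ¬ (2 * s a < q * B₂)), s a := by
            calc (q - A.card) * (q * B₂ - s a₀)
                = ∑ _a ∈ Finset.univ.filter (fun a => ¬ (2 * s a < q * B₂)), (q * B₂ - s a₀) := by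
                  rw [Finset.sum_const, hcard_out, smul_eq_mul]
              _ ≤ _ := Finset.sum_le_sum fun a ha => hout_ge a ((hmem_out a).mp ha)
          -- final arithmetic
          rw [hsum_split, hsumA]
          have hq1 : 1 ≤ q := by omega
          have hcq : A.card ≤ q := by omega
          have hσq : s a₀ ≤ q * B₂ := by omega
          set P := ∑ a ∈ Finset.univ.filter (fun a => ¬ (2 * s a < q * B₂)), s a with hPdef
          have hsum_out' : ((q:ℤ) - (A.card:ℤ)) * ((q:ℤ)*(B₂:ℤ) - ((s a₀:ℕ):ℤ)) ≤ (P : ℤ) := by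
            have hcast := (Nat.cast_le (α := ℤ)).mpr hsum_out
            push_cast [Nat.cast_sub hcq, Nat.cast_sub hσq] at hcast
            exact hcast
          have harith : (2*((q:ℤ)-1)*(B₂:ℤ) : ℤ) ≤ (A.card : ℤ) * ((s a₀ : ℕ):ℤ) + (P:ℤ) := by
            refine count_arith (by exact_mod_cast hq) (by exact_mod_cast hc₀pos) ?_
              (by positivity) (by exact_mod_cast hσ₀B) (by exact_mod_cast le_of_lt h2σ₀)
              hsum_out'
            have := hc₀lt
            zify [hq1] at this
            exact this
          have hfin : ((2*(q-1)*B₂ : ℕ) : ℤ) ≤ ((A.card * s a₀ + P : ℕ) : ℤ) := by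
            push_cast [Nat.cast_sub hq1]
            linarith
          exact_mod_cast hfin

def phi {q : ℕ} (c : Fin q) : ℝ := if (c : ℕ) = 0 then 1 else 0

lemma sum_phi {q : ℕ} (hq : 0 < q) : ∑ c : Fin q, phi c = 1 := by
  rw [Finset.sum_eq_single (⟨0, hq⟩ : Fin q)]
  · simp [phi]
  · intro b _ hb
    have : (b : ℕ) ≠ 0 := by
      intro hcon
      apply hb
      apply Fin.ext
      simpa using hcon
    simp [phi, this]
  · intro hcon
    exact absurd (Finset.mem_univ _) hcon

lemma suppCard_smul {n q : ℕ} {c : ℝ} (hc : c ≠ 0) (h : (Fin n → Fin q) → ℝ) :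
    suppCard n q (c • h) = suppCard n q h := by
  rw [suppCard_eq, suppCard_eq]
  congr 1
  apply Finset.filter_congr
  intro x _
  simp only [Pi.smul_apply, smul_eq_mul, ne_eq, mul_eq_zero, not_or]
  constructor
  · intro hx; simp [hx.2]
  · intro hx; exact ⟨hc, by simpa using hx⟩

def pairExt (n q : ℕ) (h : (Fin n → Fin q) → ℝ) : (Fin (n+2) → Fin q) → ℝ :=
  fun x => (phi (x (Fin.last (n+1))) - phi (x ((Fin.last n).castSucc)))
    * h (fun k => x (k.castSucc.castSucc))

lemma res_pairExt (n q : ℕ) (h : (Fin n → Fin q) → ℝ) (b : Fin q) :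
    res (n+1) q b (pairExt n q h)
      = fun y => (phi b - phi (y (Fin.last n))) * h (fun k => y k.castSucc) := by
  funext y
  show (phi ((Fin.snoc y b : Fin (n+2) → Fin q) (Fin.last (n+1)))
      - phi ((Fin.snoc y b : Fin (n+2) → Fin q) ((Fin.last n).castSucc)))
    * h (fun k => (Fin.snoc y b : Fin (n+2) → Fin q) (k.castSucc.castSucc)) = _
  rw [Fin.snoc_last]
  have h1 : (Fin.snoc y b : Fin (n+2) → Fin q) ((Fin.last n).castSucc) = y (Fin.last n) := by
    simp
  have h2 : (fun k => (Fin.snoc y b : Fin (n+2) → Fin q) (k.castSucc.castSucc))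
      = fun k : Fin n => y k.castSucc := by
    funext k
    simp
  rw [h1, h2]

lemma res_res_pairExt (n q : ℕ) (h : (Fin n → Fin q) → ℝ) (a b : Fin q) :
    res n q a (res (n+1) q b (pairExt n q h)) = (phi b - phi a) • h := by
  funext x''
  rw [res_pairExt]
  show (phi b - phi ((Fin.snoc x'' a : Fin (n+1) → Fin q) (Fin.last n)))
      * h (fun k => (Fin.snoc x'' a : Fin (n+1) → Fin q) k.castSucc) = _
  rw [Fin.snoc_last]
  have : (fun k => (Fin.snoc x'' a : Fin (n+1) → Fin q) k.castSucc) = x'' := by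
    funext k; rw [Fin.snoc_castSucc]
  rw [this]
  rfl

lemma res_pairExt_eval (n q : ℕ) (h : (Fin n → Fin q) → ℝ) (c a : Fin q) (x'' : Fin n → Fin q) :
    res (n+1) q c (pairExt n q h) (Fin.snoc x'' a) = (phi c - phi a) * h x'' := by
  have := congrFun (res_res_pairExt n q h a c) x''
  exact this

lemma sum_phi_sub_left {q : ℕ} (hq : 0 < q) (b : Fin q) :
    ∑ c : Fin q, (phi b - phi c) = (q : ℝ) * phi b - 1 := by
  rw [Finset.sum_sub_distrib, Finset.sum_const, sum_phi hq]
  simp [mul_comm]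

lemma memU_pairExt {n q i : ℕ} (hq : 0 < q) {h : (Fin n → Fin q) → ℝ}
    (hmem : memU n q i h) : memU (n+2) q (i+1) (pairExt n q h) := by
  have key : ∀ (x'' : Fin n → Fin q) (a b : Fin q),
      adjSum (n+2) q (pairExt n q h) (Fin.snoc (Fin.snoc x'' a) b)
        = (((n+2 : ℕ) : ℝ) * ((q:ℝ) - 1) - (q:ℝ) * ((i+1 : ℕ) : ℝ))
          * pairExt n q h (Fin.snoc (Fin.snoc x'' a) b) := by
    intro x'' a b
    rw [adjSum_snoc (n+1) q _ (Fin.snoc x'' a) b]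
    rw [adjSum_snoc n q _ x'' a]
    rw [res_res_pairExt n q h a b]
    rw [adjSum_smul]
    rw [hmem x'']
    have e1 : ∀ c : Fin q, res n q c (res (n+1) q b (pairExt n q h)) x''
        = (phi b - phi c) * h x'' := by
      intro c
      rw [res_res_pairExt n q h c b]
      rfl
    rw [Finset.sum_congr rfl (fun c _ => e1 c)]
    have e2 : ((phi b - phi a) • h) x'' = (phi b - phi a) * h x'' := rfl
    rw [e2]
    have e3 : ∀ c : Fin q, res (n+1) q c (pairExt n q h) (Fin.snoc x'' a)
        = (phi c - phi a) * h x'' := fun c => res_pairExt_eval n q h c a x''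
    rw [Finset.sum_congr rfl (fun c _ => e3 c)]
    rw [e3 b]
    have e4 : pairExt n q h (Fin.snoc (Fin.snoc x'' a) b) = (phi b - phi a) * h x'' := by
      show res (n+1) q b (pairExt n q h) (Fin.snoc x'' a) = _
      exact res_pairExt_eval n q h b a x''
    rw [e4]
    have e5 : ∑ c : Fin q, (phi b - phi c) * h x'' = ((q:ℝ) * phi b - 1) * h x'' := by
      rw [← Finset.sum_mul, sum_phi_sub_left hq b]
    have e6 : ∑ c : Fin q, (phi c - phi a) * h x'' = (1 - (q:ℝ) * phi a) * h x'' := by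
      rw [← Finset.sum_mul]
      have : ∑ c : Fin q, (phi c - phi a) = 1 - (q:ℝ) * phi a := by
        rw [Finset.sum_sub_distrib, Finset.sum_const, sum_phi hq]
        simp [mul_comm]
      rw [this]
    rw [e5, e6]
    push_cast
    ring
  intro x
  have hx : x = Fin.snoc (Fin.init x) (x (Fin.last (n+1))) := (Fin.snoc_init_self x).symm
  have hy : Fin.init x = Fin.snoc (Fin.init (Fin.init x)) (Fin.init x (Fin.last n)) :=
    (Fin.snoc_init_self (Fin.init x)).symm
  rw [hx, hy]
  exact key _ _ _

lemma suppCard_pairExt {n q : ℕ} (hq : 0 < q) (h : (Fin n → Fin q) → ℝ) :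
    suppCard (n+2) q (pairExt n q h) = 2 * (q-1) * suppCard n q h := by
  classical
  set S := suppCard n q h with hS
  set z : Fin q := ⟨0, hq⟩ with hz
  have hval : ∀ c : Fin q, (c : ℕ) = 0 ↔ c = z := by
    intro c
    constructor
    · intro hc; apply Fin.ext; simpa using hc
    · intro hc; rw [hc]
  have hterm : ∀ b a : Fin q, suppCard n q ((phi b - phi a) • h)
      = if ((b:ℕ) = 0 ↔ (a:ℕ) = 0) then 0 else S := by
    intro b a
    by_cases hb : (b:ℕ) = 0 <;> by_cases ha : (a:ℕ) = 0
    · simp only [phi, if_pos hb, if_pos ha, sub_self, zero_smul, suppCard_zero]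
      simp [hb, ha]
    · rw [if_neg (by tauto)]
      rw [suppCard_smul (by simp [phi, hb, ha]) h]
    · rw [if_neg (by tauto)]
      rw [suppCard_smul (by simp [phi, hb, ha]) h]
    · simp only [phi, if_neg hb, if_neg ha, sub_self, zero_smul, suppCard_zero]
      simp [hb, ha]
  have hinner : ∀ b : Fin q, (∑ a : Fin q, suppCard n q ((phi b - phi a) • h))
      = if (b:ℕ) = 0 then (q-1) * S else S := by
    intro b
    rw [Finset.sum_congr rfl (fun a _ => hterm b a)]
    rw [← Finset.add_sum_erase Finset.univ _ (Finset.mem_univ z)]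
    have hzval : ((z:ℕ) = 0) := rfl
    have herase : ∀ a ∈ Finset.univ.erase z, ((a:ℕ) = 0) = False := by
      intro a ha
      simp only [eq_iff_iff, iff_false]
      intro hcon
      exact (Finset.mem_erase.mp ha).1 ((hval a).mp hcon)
    by_cases hb : (b:ℕ) = 0
    · rw [if_pos hb]
      rw [if_pos (by rw [hzval]; tauto)]
      have : ∀ a ∈ Finset.univ.erase z, (if ((b:ℕ) = 0 ↔ (a:ℕ) = 0) then 0 else S) = S := by
        intro a ha
        rw [if_neg]
        intro hcon
        exact (Finset.mem_erase.mp ha).1 ((hval a).mp (hcon.mp hb))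
      rw [Finset.sum_congr rfl this, Finset.sum_const, smul_eq_mul]
      rw [Finset.card_erase_of_mem (Finset.mem_univ z), Finset.card_univ, Fintype.card_fin]
      omega
    · rw [if_neg hb]
      rw [if_neg (by rw [hzval]; tauto)]
      have : ∀ a ∈ Finset.univ.erase z, (if ((b:ℕ) = 0 ↔ (a:ℕ) = 0) then 0 else S) = 0 := by
        intro a ha
        rw [if_pos]
        constructor
        · intro hcon; exact absurd hcon hb
        · intro hcon; exact absurd ((hval a).mp hcon) (Finset.mem_erase.mp ha).1
      rw [Finset.sum_congr rfl this, Finset.sum_const, smul_eq_mul]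
      omega
  rw [suppCard_split]
  have e1 : ∀ b : Fin q, suppCard (n+1) q (res (n+1) q b (pairExt n q h))
      = ∑ a : Fin q, suppCard n q ((phi b - phi a) • h) := by
    intro b
    rw [suppCard_split]
    refine Finset.sum_congr rfl fun a _ => ?_
    rw [res_res_pairExt]
  rw [Finset.sum_congr rfl (fun b _ => e1 b)]
  rw [Finset.sum_congr rfl (fun b _ => hinner b)]
  rw [← Finset.add_sum_erase Finset.univ _ (Finset.mem_univ z)]
  rw [if_pos (by rfl : ((z:ℕ) = 0))]
  have : ∀ b ∈ Finset.univ.erase z, (if (b:ℕ) = 0 then (q-1) * S else S) = S := by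
    intro b hb
    rw [if_neg]
    intro hcon
    exact (Finset.mem_erase.mp hb).1 ((hval b).mp hcon)
  rw [Finset.sum_congr rfl this, Finset.sum_const, smul_eq_mul]
  rw [Finset.card_erase_of_mem (Finset.mem_univ z), Finset.card_univ, Fintype.card_fin]
  ring_nf


lemma suppCard_ne_zero {n q : ℕ} {f : (Fin n → Fin q) → ℝ} (h : suppCard n q f ≠ 0) :
    f ≠ 0 := by
  intro hcon
  rw [hcon, suppCard_zero] at h
  exact h rfl

lemma attain {q : ℕ} (hq : 3 ≤ q) : ∀ i n, 2*i ≤ n →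
    ∃ f : (Fin n → Fin q) → ℝ, f ≠ 0 ∧ memU n q i f ∧
      suppCard n q f = 2^i * (q-1)^i * q^(n-2*i) := by
  intro i
  induction i with
  | zero =>
      intro n _
      refine ⟨fun _ => 1, ?_, memU_const n q 1, ?_⟩
      · intro hcon
        have : (1:ℝ) = 0 := congrFun hcon (fun _ => ⟨0, by omega⟩)
        norm_num at this
      · rw [suppCard_eq]
        have : (Finset.univ.filter fun x : Fin n → Fin q => (1:ℝ) ≠ 0) = Finset.univ := by
          apply Finset.filter_true_of_mem
          intro x _
          norm_num
        rw [this, Finset.card_univ]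
        simp [Fintype.card_fun]
  | succ i ih =>
      intro n hn
      obtain ⟨m, rfl⟩ : ∃ m, n = m + 2 := ⟨n-2, by omega⟩
      obtain ⟨h, hne, hmem, hsupp⟩ := ih m (by omega)
      have hq0 : 0 < q := by omega
      refine ⟨pairExt m q h, ?_, memU_pairExt hq0 hmem, ?_⟩
      · apply suppCard_ne_zero
        rw [suppCard_pairExt hq0 h]
        have h1 : 1 ≤ suppCard m q h := suppCard_pos hne
        have : 0 < 2 * (q-1) * suppCard m q h :=
          Nat.mul_pos (Nat.mul_pos (by omega) (by omega)) (by omega)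
        omega
      · rw [suppCard_pairExt hq0 h, hsupp]
        have hexp : m - 2*i = m + 2 - 2*(i+1) := by omega
        rw [← hexp, pow_succ, pow_succ]
        ring

/-- for q ≥ 3 and i ≤ ⌊n/2⌋, every nonzero eigenfunction of H(n,q) for
eigenvalue n(q-1)-qi has support of cardinality at least 2^i (q-1)^i q^{n-2i},
and this bound is attained. -/
theorem min_support_eigenfun_low (n q i : ℕ) (hq : 3 ≤ q) (hi : i ≤ n / 2) :
    (∀ f : (Fin n → Fin q) → ℝ, f ≠ 0 → memU n q i f →
      2 ^ i * (q - 1) ^ i * q ^ (n - 2 * i) ≤ suppCard n q f) ∧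
    (∃ f : (Fin n → Fin q) → ℝ, f ≠ 0 ∧ memU n q i f ∧
      suppCard n q f = 2 ^ i * (q - 1) ^ i * q ^ (n - 2 * i)) := by
  have h2i : 2 * i ≤ n := by omega
  constructor
  · intro f hf0 hmem
    have hUI : memUI n q i i f := memU_memUI hmem le_rfl le_rfl
    have := lowerBound hq n i i le_rfl (by omega) f hUI hf0
    have hexp : n - i - i = n - 2*i := by omega
    rw [hexp] at this
    exact this
  · exact attain hq i n h2i
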